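/- Let ε be a real symmetric positive definite 2s×2s matrix (the energy matrix of the quadratic Hamiltonian H = R ε Rᵀ). Then there exists a complex structure J_H on (ℝ^{2s}, Δ) commuting with εΔ, i.e., J_H² = −I, ΔJ_H = −J_HᵀΔ, ΔJ_H is positive semidefinite, and J_H(εΔ) = (εΔ)J_H. (Such a J_H is given by the orthogonal factor of the polar decomposition of −εΔ in the Euclidean space with inner product ε(z,z') = −zᵀΔεΔz'.) -/

import Mathlib

open Matrix

/-- The standard symplectic matrix `Δ` of a system of `s` modes: block-diagonal
with `s` copies of the 2×2 block `[[0,1],[-1,0]]`. -/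
noncomputable def Sympl (s : ℕ) : Matrix (Fin 2 × Fin s) (Fin 2 × Fin s) ℝ :=
  Matrix.blockDiagonal (fun _ => !![0, 1; -1, 0])

/-- A real `2s × 2s` matrix `J` is a complex structure with respect to `Δ` if
`J² = -I`, `ΔJ = -JᵀΔ`, and `ΔJ` is positive semidefinite. -/
def IsComplexStructure {s : ℕ} (J : Matrix (Fin 2 × Fin s) (Fin 2 × Fin s) ℝ) : Prop :=
  J * J = -1 ∧ Sympl s * J = -(Jᵀ * Sympl s) ∧ (Sympl s * J).PosSemidef

section SqrtCompat
variable {n : Type*} [Fintype n] [DecidableEq n]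

open scoped MatrixOrder in
noncomputable def Matrix.PosSemidef.sqrt {A : Matrix n n ℝ} (_hA : A.PosSemidef) :
    Matrix n n ℝ := CFC.sqrt A

open scoped MatrixOrder in
lemma Matrix.PosSemidef.sqrt_mul_self {A : Matrix n n ℝ} (hA : A.PosSemidef) :
    hA.sqrt * hA.sqrt = A :=
  CFC.sqrt_mul_sqrt_self A hA.nonneg

open scoped MatrixOrder in
lemma Matrix.PosSemidef.posSemidef_sqrt {A : Matrix n n ℝ} (hA : A.PosSemidef) :
    hA.sqrt.PosSemidef :=
  (CFC.sqrt_nonneg A).posSemidef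

open scoped MatrixOrder in
lemma Matrix.PosSemidef.eq_sqrt_of_sq_eq {B A : Matrix n n ℝ} (hB : B.PosSemidef)
    (hA : A.PosSemidef) (h : B ^ 2 = A) : B = hA.sqrt :=
  ((CFC.sqrt_eq_iff A B hA.nonneg hB.nonneg).mpr (by rw [← h, pow_two])).symm

end SqrtCompat

section Aux
variable {n : Type*} [Fintype n] [DecidableEq n]

lemma herm_transpose_eq {A : Matrix n n ℝ} (h : A.IsHermitian) : Aᵀ = A := by
  rw [← Matrix.conjTranspose_eq_transpose_of_trivial]; exact h

lemma spec_nonneg_of_posSemidef {P : Matrix n n ℝ} (hP : P.PosSemidef) {μ : ℝ}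
    (hμ : μ ∈ spectrum ℝ P) : 0 ≤ μ := by
  rw [spectrum.mem_iff, Matrix.isUnit_iff_isUnit_det, isUnit_iff_ne_zero, not_not] at hμ
  obtain ⟨v, hv0, hv⟩ := (Matrix.exists_mulVec_eq_zero_iff).mpr hμ
  have h1 : P *ᵥ v = μ • v := by
    rw [sub_mulVec, Algebra.algebraMap_eq_smul_one, smul_mulVec, one_mulVec,
      sub_eq_zero] at hv
    exact hv.symm
  have h2 : 0 ≤ dotProduct (star v) (P *ᵥ v) := hP.dotProduct_mulVec_nonneg v
  rw [h1, star_trivial] at h2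
  have h3 : 0 < dotProduct v v := by
    rcases (Finset.sum_nonneg fun i _ => mul_self_nonneg (v i)).lt_or_eq with h | h
    · exact h
    · exact absurd ((dotProduct_self_eq_zero).mp h.symm) hv0
  rw [dotProduct_smul, smul_eq_mul] at h2
  nlinarith

set_option maxHeartbeats 1000000 in
lemma commute_sqrt {M Q : Matrix n n ℝ} (hQ : Q.PosSemidef) (hQu : IsUnit Q)
    (hskew : Mᵀ = -M) (hMM : M * M = -Q) : M * hQ.sqrt = hQ.sqrt * M := by
  set P := hQ.sqrt with hPdef
  have hPP : P * P = Q := hQ.sqrt_mul_self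
  have hPpsd : P.PosSemidef := hQ.posSemidef_sqrt
  have hPsym : Pᵀ = P := herm_transpose_eq hPpsd.1
  have h2 : IsUnit (M.det * M.det) := by
    rw [← Matrix.det_mul, hMM]
    exact (Matrix.isUnit_iff_isUnit_det _).mp hQu.neg
  have hdetM : IsUnit M.det := isUnit_of_mul_isUnit_left h2
  have hMinv : M * M⁻¹ = 1 := Matrix.mul_nonsing_inv M hdetM
  have hinvM : M⁻¹ * M = 1 := Matrix.nonsing_inv_mul M hdetM
  have hPQ : P * Q = Q * P := by rw [← hPP, ← mul_assoc]
  have hQM : Q * M = M * Q := by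
    have h := (mul_assoc M M M).symm
    rw [hMM] at h
    -- h : M * -Q = -Q * M
    rw [mul_neg, neg_mul, neg_inj] at h
    exact h.symm
  have hnegMinv : (-M)⁻¹ = -(M⁻¹) := Matrix.inv_eq_left_inv (by rw [neg_mul_neg, hinvM])
  have hXT : (M * P * M⁻¹)ᵀ = M * P * M⁻¹ := by
    rw [Matrix.transpose_mul, Matrix.transpose_mul, Matrix.transpose_nonsing_inv, hskew,
      hPsym, hnegMinv]
    simp only [mul_neg, neg_mul, neg_neg]
    -- ⊢ M⁻¹ * (P * M) = M * P * M⁻¹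
    have : M⁻¹ * (P * M) * (M * M⁻¹) = M * P * M⁻¹ := by
      calc M⁻¹ * (P * M) * (M * M⁻¹) = M⁻¹ * (P * (M * M)) * M⁻¹ := by
            simp only [mul_assoc]
        _ = M⁻¹ * (M * M * P) * M⁻¹ := by rw [hMM, mul_neg, neg_mul, hPQ]
        _ = M⁻¹ * M * (M * P * M⁻¹) := by simp only [mul_assoc]
        _ = M * P * M⁻¹ := by rw [hinvM, one_mul]
    rw [hMinv, mul_one] at this
    exact this
  have hXherm : (M * P * M⁻¹).IsHermitian := by
    rw [Matrix.IsHermitian, Matrix.conjTranspose_eq_transpose_of_trivial, hXT]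
  have hX2 : (M * P * M⁻¹) ^ 2 = Q := by
    rw [pow_two]
    calc M * P * M⁻¹ * (M * P * M⁻¹) = M * P * (M⁻¹ * M) * P * M⁻¹ := by
          simp only [mul_assoc]
      _ = M * (P * P) * M⁻¹ := by rw [hinvM]; simp only [mul_one, mul_assoc]
      _ = Q * (M * M⁻¹) := by rw [hPP, ← hQM]; simp only [mul_assoc]
      _ = Q := by rw [hMinv, mul_one]
  have hMu : IsUnit M := (Matrix.isUnit_iff_isUnit_det M).mpr hdetM
  have hXpsd : (M * P * M⁻¹).PosSemidef := by
    refine (Matrix.IsHermitian.posSemidef_iff_eigenvalues_nonneg hXherm).mpr fun i => ?_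
    refine spec_nonneg_of_posSemidef hPpsd ?_
    have hmem := hXherm.eigenvalues_mem_spectrum_real i
    have hEq : M * P * M⁻¹ = (hMu.unit : Matrix n n ℝ) * P * ((hMu.unit⁻¹ : (Matrix n n ℝ)ˣ) : Matrix n n ℝ) := by
      rw [IsUnit.unit_spec, Matrix.coe_units_inv, IsUnit.unit_spec]
    have hspec : spectrum ℝ (M * P * M⁻¹) = spectrum ℝ P := by
      rw [hEq]; exact spectrum.units_conjugate
    rw [← hspec]; exact hmem
  have hXP : M * P * M⁻¹ = P := (hXpsd.eq_sqrt_of_sq_eq hQ hX2).symm ▸ rfl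
  calc M * P = M * P * (M⁻¹ * M) := by rw [hinvM, mul_one]
    _ = (M * P * M⁻¹) * M := by simp only [mul_assoc]
    _ = P * M := by rw [hXP]

end Aux

lemma sympl_mul_self (s : ℕ) : Sympl s * Sympl s = -1 := by
  have hB : (!![0, 1; -1, 0] * !![0, 1; -1, 0] : Matrix (Fin 2) (Fin 2) ℝ) = -1 := by
    ext i j
    fin_cases i <;> fin_cases j <;>
      simp [Matrix.mul_apply, Fin.sum_univ_two, Matrix.one_apply]
  rw [Sympl, ← Matrix.blockDiagonal_mul]
  simp only [hB]
  rw [show (fun _ : Fin s => (-1 : Matrix (Fin 2) (Fin 2) ℝ)) = -1 from rfl,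
    Matrix.blockDiagonal_neg, Matrix.blockDiagonal_one]

lemma sympl_transpose (s : ℕ) : (Sympl s)ᵀ = -Sympl s := by
  have hBT : (!![0, 1; -1, 0]ᵀ : Matrix (Fin 2) (Fin 2) ℝ) = -!![0, 1; -1, 0] := by
    ext i j
    fin_cases i <;> fin_cases j <;> simp
  rw [Sympl, Matrix.blockDiagonal_transpose]
  simp only [hBT]
  rw [show (fun _ : Fin s => -(!![0, 1; -1, 0] : Matrix (Fin 2) (Fin 2) ℝ)) =
      -(fun _ : Fin s => (!![0, 1; -1, 0] : Matrix (Fin 2) (Fin 2) ℝ)) from rfl,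
    Matrix.blockDiagonal_neg]

/-- For every real symmetric positive definite energy matrix `ε`
there exists a complex structure `J_H` on `(ℝ^{2s}, Δ)` commuting with `εΔ`. -/
theorem exists_complexStructure_commuting_energy (s : ℕ)
    (ε : Matrix (Fin 2 × Fin s) (Fin 2 × Fin s) ℝ) (hε : ε.PosDef) :
    ∃ J : Matrix (Fin 2 × Fin s) (Fin 2 × Fin s) ℝ, IsComplexStructure J ∧
      J * (ε * Sympl s) = (ε * Sympl s) * J := by
  classical
  have hΔ2 := sympl_mul_self s
  have hΔT := sympl_transpose s
  have hεpsd := hε.posSemidef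
  set E := hεpsd.sqrt with hEdef
  have hE2 : E * E = ε := hεpsd.sqrt_mul_self
  have hEpsd : E.PosSemidef := hεpsd.posSemidef_sqrt
  have hEsym : Eᵀ = E := herm_transpose_eq hEpsd.1
  have hdetE : IsUnit E.det := by
    have h : IsUnit (E.det * E.det) := by
      rw [← Matrix.det_mul, hE2]
      exact (Matrix.isUnit_iff_isUnit_det _).mp hε.isUnit
    exact isUnit_of_mul_isUnit_left h
  set F := E⁻¹ with hFdef
  have hEF : E * F = 1 := Matrix.mul_nonsing_inv E hdetE
  have hFE : F * E = 1 := Matrix.nonsing_inv_mul E hdetE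
  have hFsym : Fᵀ = F := by rw [hFdef, Matrix.transpose_nonsing_inv, hEsym]
  set M := E * (Sympl s * E) with hMdef
  have hskew : Mᵀ = -M := by
    rw [hMdef]
    simp only [Matrix.transpose_mul, hEsym, hΔT, Matrix.mul_neg, Matrix.neg_mul, mul_assoc]
  set Q := -(M * M) with hQdef
  have hMM : M * M = -Q := by rw [hQdef, neg_neg]
  have hQval : Q = (Sympl s * E)ᵀ * ε * (Sympl s * E) := by
    rw [hQdef, hMdef, ← hE2, Matrix.transpose_mul, hEsym, hΔT]
    noncomm_ring
  have hQpsd : Q.PosSemidef := by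
    have h := hε.posSemidef.conjTranspose_mul_mul_same (Sympl s * E)
    rwa [Matrix.conjTranspose_eq_transpose_of_trivial, ← hQval] at h
  have hΔu : IsUnit (Sympl s) := by
    refine ⟨⟨Sympl s, -Sympl s, ?_, ?_⟩, rfl⟩
    · rw [Matrix.mul_neg, hΔ2, neg_neg]
    · rw [Matrix.neg_mul, hΔ2, neg_neg]
  have hEu : IsUnit E := (Matrix.isUnit_iff_isUnit_det E).mpr hdetE
  have hMu : IsUnit M := hEu.mul (hΔu.mul hEu)
  have hQu : IsUnit Q := by rw [hQdef]; exact (hMu.mul hMu).neg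
  have hcomm : M * hQpsd.sqrt = hQpsd.sqrt * M := commute_sqrt hQpsd hQu hskew hMM
  set P := hQpsd.sqrt with hPdef
  have hPP : P * P = Q := hQpsd.sqrt_mul_self
  have hPpsd : P.PosSemidef := hQpsd.posSemidef_sqrt
  have hPsym : Pᵀ = P := herm_transpose_eq hPpsd.1
  have hdetP : IsUnit P.det := by
    have h : IsUnit (P.det * P.det) := by
      rw [← Matrix.det_mul, hPP]
      exact (Matrix.isUnit_iff_isUnit_det _).mp hQu
    exact isUnit_of_mul_isUnit_left h
  set R := P⁻¹ with hRdef
  have hPR : P * R = 1 := Matrix.mul_nonsing_inv P hdetP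
  have hRP : R * P = 1 := Matrix.nonsing_inv_mul P hdetP
  have hRsym : Rᵀ = R := by rw [hRdef, Matrix.transpose_nonsing_inv, hPsym]
  have hRM : R * M = M * R := by
    calc R * M = R * (M * (P * R)) := by rw [hPR, mul_one]
      _ = R * (M * P * R) := by rw [mul_assoc M P R]
      _ = R * (P * M * R) := by rw [hcomm]
      _ = R * P * (M * R) := by simp only [mul_assoc]
      _ = M * R := by rw [hRP, one_mul]
  -- cancellation / commutation simp rules
  have cEF : ∀ X, E * (F * X) = X := fun X => by rw [← mul_assoc, hEF, one_mul]
  have cFE : ∀ X, F * (E * X) = X := fun X => by rw [← mul_assoc, hFE, one_mul]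
  have cPR : ∀ X, P * (R * X) = X := fun X => by rw [← mul_assoc, hPR, one_mul]
  have cRP : ∀ X, R * (P * X) = X := fun X => by rw [← mul_assoc, hRP, one_mul]
  have cRM : ∀ X, R * (M * X) = M * (R * X) := fun X => by
    rw [← mul_assoc, hRM, mul_assoc]
  have cMM : ∀ X, M * (M * X) = -(Q * X) := fun X => by
    rw [← mul_assoc, hMM, neg_mul]
  have hQR : Q * R = P := by rw [← hPP, mul_assoc, hPR, mul_one]
  have cQR : ∀ X, Q * (R * X) = P * X := fun X => by
    rw [← mul_assoc, hQR]
  have hRQ : R * Q = P := by rw [← hPP, ← mul_assoc, hRP, one_mul]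
  have cRQ : ∀ X, R * (Q * X) = P * X := fun X => by
    rw [← mul_assoc, hRQ]
  refine ⟨-(E * (M * (R * F))), ⟨?_, ?_, ?_⟩, ?_⟩
  · -- J * J = -1
    simp only [neg_mul, mul_neg, neg_neg, mul_assoc, cEF, cFE, cPR, cRP, cRM, cMM,
      cQR, cRQ, hRM, hMM, hQR, hRQ, hEF, hFE, hPR, hRP, one_mul, mul_one]
  · -- Δ J = -(Jᵀ Δ)
    have hΔeq : Sympl s = F * (M * F) := by
      rw [hMdef]
      simp only [mul_assoc, cFE, hEF, mul_one]
    have h1 : Sympl s * -(E * (M * (R * F))) = F * (P * F) := by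
      conv_lhs => rw [hΔeq]
      simp only [neg_mul, mul_neg, neg_neg, mul_assoc, cEF, cFE, cPR, cRP, cRM, cMM,
        cQR, cRQ, hEF, hFE, hPR, hRP, one_mul, mul_one]
    have hJT : (-(E * (M * (R * F))))ᵀ = F * (R * (M * E)) := by
      simp only [Matrix.transpose_neg, Matrix.transpose_mul, hEsym, hFsym, hRsym, hskew,
        Matrix.mul_neg, Matrix.neg_mul, neg_neg, mul_assoc]
    have h2 : -((-(E * (M * (R * F))))ᵀ * Sympl s) = F * (P * F) := by
      rw [hJT]
      conv_lhs => rw [hΔeq]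
      simp only [neg_mul, mul_neg, neg_neg, mul_assoc, cEF, cFE, cPR, cRP, cRM, cMM,
        cQR, cRQ, hEF, hFE, hPR, hRP, one_mul, mul_one]
    rw [h1, h2]
  · -- psd
    have hΔeq : Sympl s = F * (M * F) := by
      rw [hMdef]
      simp only [mul_assoc, cFE, hEF, mul_one]
    have h1 : Sympl s * -(E * (M * (R * F))) = F * (P * F) := by
      conv_lhs => rw [hΔeq]
      simp only [neg_mul, mul_neg, neg_neg, mul_assoc, cEF, cFE, cPR, cRP, cRM, cMM,
        cQR, cRQ, hEF, hFE, hPR, hRP, one_mul, mul_one]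
    rw [h1]
    have h := hPpsd.mul_mul_conjTranspose_same F
    rwa [Matrix.conjTranspose_eq_transpose_of_trivial, hFsym, mul_assoc] at h
  · -- commutes with ε Δ
    have hεΔ : ε * Sympl s = E * (M * F) := by
      rw [hMdef, ← hE2]
      simp only [mul_assoc, hEF, mul_one]
    rw [hεΔ]
    simp only [neg_mul, mul_neg, neg_neg, mul_assoc, cEF, cFE, cPR, cRP, cRM, cMM,
      cQR, cRQ, hEF, hFE, hPR, hRP, one_mul, mul_one]
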